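/- For every λ ≥ 0 and h ≥ 0, the annealed free energy exists and equals lim_{N→∞} (1/N) log 𝔼 Z_{N,ω}(λ,h) = 2λ(λ − h) if h < λ, and = 0 if h ≥ λ. -/

import Mathlib

open MeasureTheory ProbabilityTheory Filter Finset

/-- The Boltzmann weight `(1 + exp(-2λh(b-a) - 2λ Σ_{i=a+1}^b ω_i))/2`
of a single copolymer excursion from `a` to `b`. -/
noncomputable def cw (lam h : ℝ) (ω : ℕ → ℝ) (a b : ℕ) : ℝ :=
  (1 + Real.exp (-(2 * lam * h * ((b : ℝ) - (a : ℝ)))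
      - 2 * lam * ∑ i ∈ Finset.Icc (a + 1) b, ω i)) / 2

/-- The copolymer partition function `Z_{N,ω}(λ,h)`: summing over the position `j`
of the last renewal point before `N` reproduces the sum over all renewal
configurations `0 = t_0 < t_1 < ⋯ < t_m = N` of `∏_r K(t_r - t_{r-1}) ·
(1+exp(-2λh(t_r-t_{r-1}) - 2λ Σ ω_i))/2`. -/
noncomputable def Zpart (K : ℕ → ℝ) (lam h : ℝ) (ω : ℕ → ℝ) : ℕ → ℝ
  | 0 => 1
  | N + 1 => ∑ j ∈ (Finset.range (N + 1)).attach,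
      Zpart K lam h ω j.1 * K (N + 1 - j.1) * cw lam h ω j.1 (N + 1)
  decreasing_by exact Finset.mem_range.mp j.2

/-- `P` is the joint law of an IID sequence of standard Gaussian random variables:
a probability measure on `ℕ → ℝ` under which the coordinates are independent,
each with law `gaussianReal 0 1`. -/
def IsGaussianDisorder (P : Measure (ℕ → ℝ)) : Prop :=
  IsProbabilityMeasure P ∧
    iIndepFun (fun i ω => ω i) P ∧
    ∀ i : ℕ, P.map (fun ω => ω i) = gaussianReal 0 1

lemma gauss_pdf_mul (t x : ℝ) :
    gaussianPDFReal 0 1 x * Real.exp (t * x)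
      = Real.exp (t ^ 2 / 2) * gaussianPDFReal t 1 x := by
  unfold gaussianPDFReal
  rw [mul_assoc, ← Real.exp_add, mul_comm (Real.exp (t ^ 2 / 2))]
  have key : ∀ s A B C : ℝ, A = B + C → s * Real.exp A = s * Real.exp B * Real.exp C := by
    intro s A B C hh
    rw [hh, Real.exp_add]; ring
  apply key
  push_cast
  ring

lemma gauss_density : gaussianReal 0 1
    = MeasureTheory.volume.withDensity (fun x => ((gaussianPDFReal 0 1 x).toNNReal : ENNReal)) := by
  rw [gaussianReal_of_var_ne_zero _ one_ne_zero]
  rfl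

lemma gauss_smul_eq (t : ℝ) : (fun x => ((gaussianPDFReal 0 1 x).toNNReal) • Real.exp (t * x))
      = fun x => Real.exp (t ^ 2 / 2) * gaussianPDFReal t 1 x := by
  funext x
  rw [NNReal.smul_def, Real.coe_toNNReal _ (gaussianPDFReal_nonneg _ _ _), smul_eq_mul,
    gauss_pdf_mul]

lemma integrable_exp_gaussian (t : ℝ) :
    Integrable (fun x => Real.exp (t * x)) (gaussianReal 0 1) := by
  rw [gauss_density,
    integrable_withDensity_iff_integrable_smul ((measurable_gaussianPDFReal 0 1).real_toNNReal)]
  rw [gauss_smul_eq]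
  exact (integrable_gaussianPDFReal t 1).const_mul _

lemma integral_exp_gaussian (t : ℝ) :
    ∫ x, Real.exp (t * x) ∂(gaussianReal 0 1) = Real.exp (t ^ 2 / 2) := by
  rw [gauss_density,
    integral_withDensity_eq_integral_smul ((measurable_gaussianPDFReal 0 1).real_toNNReal),
    gauss_smul_eq, integral_const_mul, integral_gaussianPDFReal_eq_one t one_ne_zero, mul_one]

lemma coord_integrable {P : Measure (ℕ → ℝ)} (hP : IsGaussianDisorder P) (i : ℕ) (t : ℝ) :
    Integrable (fun ω : ℕ → ℝ => Real.exp (t * ω i)) P := by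
  have hmeas : AEStronglyMeasurable (fun x : ℝ => Real.exp (t * x)) (P.map (fun ω => ω i)) :=
    (Real.continuous_exp.comp (continuous_const.mul continuous_id)).aestronglyMeasurable
  have := (integrable_map_measure hmeas (measurable_pi_apply i).aemeasurable).mp
  rw [hP.2.2 i] at this
  exact this (integrable_exp_gaussian t)

lemma coord_mgf {P : Measure (ℕ → ℝ)} (hP : IsGaussianDisorder P) (i : ℕ) (t : ℝ) :
    mgf (fun ω : ℕ → ℝ => ω i) P t = Real.exp (t ^ 2 / 2) := by
  have hmeas : AEStronglyMeasurable (fun x : ℝ => Real.exp (t * x)) (P.map (fun ω => ω i)) :=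
    (Real.continuous_exp.comp (continuous_const.mul continuous_id)).aestronglyMeasurable
  have hmap := integral_map (φ := fun ω : ℕ → ℝ => ω i) (f := fun x : ℝ => Real.exp (t * x))
    (measurable_pi_apply i).aemeasurable hmeas
  rw [hP.2.2 i, integral_exp_gaussian] at hmap
  rw [mgf]
  exact hmap.symm

lemma sum_integrable {P : Measure (ℕ → ℝ)} (hP : IsGaussianDisorder P) (s : Finset ℕ) (t : ℝ) :
    Integrable (fun ω : ℕ → ℝ => Real.exp (t * ∑ i ∈ s, ω i)) P := by
  haveI := hP.1
  have := hP.2.1.integrable_exp_mul_sum (t := t) (fun i => measurable_pi_apply i)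
    (s := s) (fun i _ => coord_integrable hP i t)
  simpa using this

lemma sum_integral {P : Measure (ℕ → ℝ)} (hP : IsGaussianDisorder P) (s : Finset ℕ) (t : ℝ) :
    ∫ ω, Real.exp (t * ∑ i ∈ s, ω i) ∂P = Real.exp (s.card * (t ^ 2 / 2)) := by
  have hs := hP.2.1.mgf_sum (t := t) (fun i => measurable_pi_apply i) s
  have hmg : mgf (∑ i ∈ s, (fun ω : ℕ → ℝ => ω i)) P t
      = ∫ ω, Real.exp (t * ∑ i ∈ s, ω i) ∂P := by
    unfold mgf
    simp [Finset.sum_apply]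
  rw [← hmg, hs,
    Finset.prod_congr rfl (fun i _ => coord_mgf hP i t), Finset.prod_const,
    ← Real.exp_nat_mul]

lemma cw_nonneg (lam h : ℝ) (ω : ℕ → ℝ) (a b : ℕ) : 0 ≤ cw lam h ω a b := by
  unfold cw
  positivity

lemma cw_meas (lam h : ℝ) (a b : ℕ) : Measurable (fun ω : ℕ → ℝ => cw lam h ω a b) := by
  unfold cw
  exact ((measurable_const.add ((measurable_const.sub
    (measurable_const.mul (Finset.measurable_sum _ (fun i _ => measurable_pi_apply i)))).exp)).div_const 2)

lemma cw_eq (lam h : ℝ) (ω : ℕ → ℝ) (a b : ℕ) :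
    cw lam h ω a b = 1 / 2 + (Real.exp (-(2 * lam * h * ((b : ℝ) - (a : ℝ)))) / 2)
      * Real.exp ((-(2 * lam)) * ∑ i ∈ Finset.Icc (a + 1) b, ω i) := by
  unfold cw
  rw [sub_eq_add_neg, Real.exp_add]
  ring

lemma cw_integrable {P : Measure (ℕ → ℝ)} (hP : IsGaussianDisorder P)
    (lam h : ℝ) (a b : ℕ) : Integrable (fun ω : ℕ → ℝ => cw lam h ω a b) P := by
  haveI := hP.1
  simp only [cw_eq]
  exact (integrable_const _).add ((sum_integrable hP _ _).const_mul _)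

lemma cw_integral {P : Measure (ℕ → ℝ)} (hP : IsGaussianDisorder P)
    (lam h : ℝ) (a b : ℕ) (hab : a ≤ b) :
    ∫ ω, cw lam h ω a b ∂P
      = (1 + Real.exp (2 * lam * (lam - h) * ((b - a : ℕ) : ℝ))) / 2 := by
  haveI := hP.1
  simp only [cw_eq]
  rw [integral_add (integrable_const _) ((sum_integrable hP _ _).const_mul _),
    integral_const, integral_const_mul, sum_integral hP]
  have hcard : ((Finset.Icc (a + 1) b).card : ℝ) = ((b - a : ℕ) : ℝ) := by
    rw [Nat.card_Icc]
    congr 1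
    omega
  have hcast : ((b - a : ℕ) : ℝ) = (b : ℝ) - (a : ℝ) := by
    exact Nat.cast_sub hab
  rw [hcard, hcast, probReal_univ, smul_eq_mul, one_mul]
  have e1 : ∀ X Y Z : ℝ, X + Y = Z → Real.exp X / 2 * Real.exp Y = Real.exp Z / 2 := by
    intro X Y Z hXYZ
    rw [← hXYZ, Real.exp_add]
    ring
  rw [e1 _ _ (2 * lam * (lam - h) * ((b : ℝ) - (a : ℝ))) (by ring)]
  ring

lemma cw_congr (lam h : ℝ) (a b : ℕ) (ω ω' : ℕ → ℝ)
    (hag : ∀ i ∈ Finset.Icc (a + 1) b, ω i = ω' i) :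
    cw lam h ω a b = cw lam h ω' a b := by
  unfold cw
  rw [Finset.sum_congr rfl hag]

lemma Zpart_congr (K : ℕ → ℝ) (lam h : ℝ) :
    ∀ N (ω ω' : ℕ → ℝ), (∀ i ∈ Finset.Icc 1 N, ω i = ω' i) →
      Zpart K lam h ω N = Zpart K lam h ω' N := by
  intro N
  induction N using Nat.strong_induction_on with
  | _ N IH =>
    match N with
    | 0 => intro ω ω' _; rw [Zpart, Zpart]
    | M + 1 =>
      intro ω ω' hag
      rw [Zpart, Zpart]
      refine Finset.sum_congr rfl ?_
      rintro ⟨j, hj⟩ -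
      have hjM : j < M + 1 := Finset.mem_range.mp hj
      have h1 : Zpart K lam h ω j = Zpart K lam h ω' j := by
        refine IH j hjM ω ω' (fun i hi => hag i ?_)
        simp only [Finset.mem_Icc] at *
        omega
      have h2 : cw lam h ω j (M + 1) = cw lam h ω' j (M + 1) := by
        refine cw_congr lam h j (M + 1) ω ω' (fun i hi => hag i ?_)
        simp only [Finset.mem_Icc] at *
        omega
      rw [h1, h2]

lemma Zpart_meas (K : ℕ → ℝ) (lam h : ℝ) :
    ∀ N, Measurable (fun ω : ℕ → ℝ => Zpart K lam h ω N) := by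
  intro N
  induction N using Nat.strong_induction_on with
  | _ N IH =>
    match N with
    | 0 => simp only [Zpart]; exact measurable_const
    | M + 1 =>
      simp only [Zpart]
      refine Finset.measurable_sum _ ?_
      rintro ⟨j, hj⟩ -
      exact ((IH j (Finset.mem_range.mp hj)).mul measurable_const).mul (cw_meas lam h j (M + 1))

lemma Zpart_nonneg (K : ℕ → ℝ) (lam h : ℝ) (hKnn : ∀ n, 0 ≤ K n) :
    ∀ N (ω : ℕ → ℝ), 0 ≤ Zpart K lam h ω N := by
  intro N
  induction N using Nat.strong_induction_on with
  | _ N IH =>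
    match N with
    | 0 => intro ω; rw [Zpart]; norm_num
    | M + 1 =>
      intro ω
      rw [Zpart]
      refine Finset.sum_nonneg ?_
      rintro ⟨j, hj⟩ -
      exact mul_nonneg (mul_nonneg (IH j (Finset.mem_range.mp hj) ω) (hKnn _))
        (cw_nonneg lam h ω j (M + 1))

lemma indep_Z_cw {P : Measure (ℕ → ℝ)} (hP : IsGaussianDisorder P)
    (K : ℕ → ℝ) (lam h : ℝ) (j M : ℕ) (hj : j ≤ M) :
    IndepFun (fun ω : ℕ → ℝ => Zpart K lam h ω j) (fun ω : ℕ → ℝ => cw lam h ω j (M + 1)) P := by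
  classical
  set S : Finset ℕ := Finset.Icc 1 j with hS
  set T : Finset ℕ := Finset.Icc (j + 1) (M + 1) with hT
  have hST : Disjoint S T := by
    rw [Finset.disjoint_left]
    intro i hiS hiT
    simp only [hS, hT, Finset.mem_Icc] at hiS hiT
    omega
  have base := hP.2.1.indepFun_finset S T hST (fun i => measurable_pi_apply i)
  let extS : ({ x // x ∈ S } → ℝ) → (ℕ → ℝ) := fun v i => if hi : i ∈ S then v ⟨i, hi⟩ else 0
  let extT : ({ x // x ∈ T } → ℝ) → (ℕ → ℝ) := fun v i => if hi : i ∈ T then v ⟨i, hi⟩ else 0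
  have hextS : Measurable extS := by
    refine measurable_pi_lambda _ (fun i => ?_)
    by_cases hi : i ∈ S
    · simp only [extS, dif_pos hi]; exact measurable_pi_apply _
    · simp only [extS, dif_neg hi]; exact measurable_const
  have hextT : Measurable extT := by
    refine measurable_pi_lambda _ (fun i => ?_)
    by_cases hi : i ∈ T
    · simp only [extT, dif_pos hi]; exact measurable_pi_apply _
    · simp only [extT, dif_neg hi]; exact measurable_const
  have hcomp := base.comp ((Zpart_meas K lam h j).comp hextS)
    ((cw_meas lam h j (M + 1)).comp hextT)
  have h1 : ((fun v => Zpart K lam h (extS v) j) ∘ (fun ω (i : S) => ω i.1))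
      = fun ω : ℕ → ℝ => Zpart K lam h ω j := by
    funext ω
    refine Zpart_congr K lam h j _ ω (fun i hi => ?_)
    simp only [Function.comp, extS]
    rw [dif_pos hi]
  have h2 : ((fun v => cw lam h (extT v) j (M + 1)) ∘ (fun ω (i : T) => ω i.1))
      = fun ω : ℕ → ℝ => cw lam h ω j (M + 1) := by
    funext ω
    refine cw_congr lam h j (M + 1) _ ω (fun i hi => ?_)
    simp only [Function.comp, extT]
    rw [dif_pos hi]
  rw [← h1, ← h2]
  exact hcomp

lemma Zpart_integrable {P : Measure (ℕ → ℝ)} (hP : IsGaussianDisorder P)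
    (K : ℕ → ℝ) (lam h : ℝ) :
    ∀ N, Integrable (fun ω : ℕ → ℝ => Zpart K lam h ω N) P := by
  haveI := hP.1
  intro N
  induction N using Nat.strong_induction_on with
  | _ N IH =>
    match N with
    | 0 => simp only [Zpart]; exact integrable_const 1
    | M + 1 =>
      simp only [Zpart]
      refine integrable_finset_sum _ ?_
      rintro ⟨j, hj⟩ -
      have hjM : j < M + 1 := Finset.mem_range.mp hj
      have hind := indep_Z_cw hP K lam h j M (by omega)
      have hmul := (hind.integrable_mul (IH j hjM) (cw_integrable hP lam h j (M + 1))).mul_const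
        (K (M + 1 - j))
      have heq : (fun ω : ℕ → ℝ => Zpart K lam h ω j * K (M + 1 - j) * cw lam h ω j (M + 1))
          = fun ω : ℕ → ℝ =>
            ((fun ω : ℕ → ℝ => Zpart K lam h ω j) * (fun ω : ℕ → ℝ => cw lam h ω j (M + 1))) ω
              * K (M + 1 - j) := by
        funext ω
        simp only [Pi.mul_apply]
        ring
      rw [heq]
      exact hmul

lemma Zpart_rec {P : Measure (ℕ → ℝ)} (hP : IsGaussianDisorder P)
    (K : ℕ → ℝ) (lam h : ℝ) (M : ℕ) :
    ∫ ω, Zpart K lam h ω (M + 1) ∂P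
      = ∑ j ∈ Finset.range (M + 1), (∫ ω, Zpart K lam h ω j ∂P) * K (M + 1 - j)
          * ((1 + Real.exp (2 * lam * (lam - h) * ((M + 1 - j : ℕ) : ℝ))) / 2) := by
  haveI := hP.1
  have hterm : ∀ j, j < M + 1 →
      Integrable (fun ω : ℕ → ℝ =>
        Zpart K lam h ω j * K (M + 1 - j) * cw lam h ω j (M + 1)) P := by
    intro j hjM
    have hind := indep_Z_cw hP K lam h j M (by omega)
    have hmul := (hind.integrable_mul (Zpart_integrable hP K lam h j)
      (cw_integrable hP lam h j (M + 1))).mul_const (K (M + 1 - j))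
    have heq : (fun ω : ℕ → ℝ => Zpart K lam h ω j * K (M + 1 - j) * cw lam h ω j (M + 1))
        = fun ω : ℕ → ℝ =>
          ((fun ω : ℕ → ℝ => Zpart K lam h ω j) * (fun ω : ℕ → ℝ => cw lam h ω j (M + 1))) ω
            * K (M + 1 - j) := by
      funext ω
      simp only [Pi.mul_apply]
      ring
    rw [heq]
    exact hmul
  calc ∫ ω, Zpart K lam h ω (M + 1) ∂P
      = ∫ ω, ∑ j ∈ (Finset.range (M + 1)).attach,
          Zpart K lam h ω j.1 * K (M + 1 - j.1) * cw lam h ω j.1 (M + 1) ∂P := by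
        simp only [Zpart]
    _ = ∑ j ∈ (Finset.range (M + 1)).attach,
          ∫ ω, Zpart K lam h ω j.1 * K (M + 1 - j.1) * cw lam h ω j.1 (M + 1) ∂P :=
        integral_finset_sum _ (fun j _ => hterm j.1 (Finset.mem_range.mp j.2))
    _ = ∑ j ∈ (Finset.range (M + 1)).attach, (∫ ω, Zpart K lam h ω j.1 ∂P) * K (M + 1 - j.1)
          * ((1 + Real.exp (2 * lam * (lam - h) * ((M + 1 - j.1 : ℕ) : ℝ))) / 2) := by
        refine Finset.sum_congr rfl ?_
        rintro ⟨j, hj⟩ -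
        have hjM : j < M + 1 := Finset.mem_range.mp hj
        have hind := indep_Z_cw hP K lam h j M (by omega)
        have heq : (fun ω : ℕ → ℝ => Zpart K lam h ω j * K (M + 1 - j) * cw lam h ω j (M + 1))
            = fun ω : ℕ → ℝ =>
              ((fun ω : ℕ → ℝ => Zpart K lam h ω j) * (fun ω : ℕ → ℝ => cw lam h ω j (M + 1))) ω
                * K (M + 1 - j) := by
          funext ω
          simp only [Pi.mul_apply]
          ring
        rw [heq, integral_mul_const,
          hind.integral_mul_eq_mul_integral (Zpart_integrable hP K lam h j).aestronglyMeasurable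
            (cw_integrable hP lam h j (M + 1)).aestronglyMeasurable,
          cw_integral hP lam h j (M + 1) (by omega)]
        ring
    _ = ∑ j ∈ Finset.range (M + 1), (∫ ω, Zpart K lam h ω j ∂P) * K (M + 1 - j)
          * ((1 + Real.exp (2 * lam * (lam - h) * ((M + 1 - j : ℕ) : ℝ))) / 2) :=
        Finset.sum_attach (Finset.range (M + 1)) (fun j =>
          (∫ ω, Zpart K lam h ω j ∂P) * K (M + 1 - j)
            * ((1 + Real.exp (2 * lam * (lam - h) * ((M + 1 - j : ℕ) : ℝ))) / 2))

lemma A_zero {P : Measure (ℕ → ℝ)} (hP : IsGaussianDisorder P) (K : ℕ → ℝ) (lam h : ℝ) :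
    ∫ ω, Zpart K lam h ω 0 ∂P = 1 := by
  haveI := hP.1
  simp only [Zpart, integral_const, probReal_univ, one_smul]

lemma Ksum_le (K : ℕ → ℝ) (hKnn : ∀ n, 0 ≤ K n) (hKsum : HasSum K 1) (M : ℕ) :
    ∑ j ∈ Finset.range (M + 1), K (M + 1 - j) ≤ 1 := by
  have h1 : ∑ j ∈ Finset.range (M + 1), K (M + 1 - j)
      = ∑ j ∈ Finset.range (M + 1), K (j + 1) := by
    rw [← Finset.sum_range_reflect (fun j => K (j + 1)) (M + 1)]
    refine Finset.sum_congr rfl (fun j hj => ?_)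
    have := Finset.mem_range.mp hj
    congr 1
    omega
  have h2 : ∑ j ∈ Finset.range (M + 1), K (j + 1)
      = ∑ i ∈ (Finset.range (M + 1)).image (· + 1), K i := by
    rw [Finset.sum_image (fun x _ y _ hxy => by omega)]
  rw [h1, h2]
  exact sum_le_hasSum _ (fun i _ => hKnn i) hKsum

lemma A_nonneg {P : Measure (ℕ → ℝ)} (K : ℕ → ℝ) (lam h : ℝ) (hKnn : ∀ n, 0 ≤ K n) (N : ℕ) :
    0 ≤ ∫ ω, Zpart K lam h ω N ∂P :=
  integral_nonneg (fun ω => Zpart_nonneg K lam h hKnn N ω)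

lemma A_upper {P : Measure (ℕ → ℝ)} (hP : IsGaussianDisorder P) (K : ℕ → ℝ) (lam h : ℝ)
    (hKnn : ∀ n, 0 ≤ K n) (hKsum : HasSum K 1) :
    ∀ N, ∫ ω, Zpart K lam h ω N ∂P ≤ Real.exp (max (2 * lam * (lam - h)) 0 * N) := by
  set c : ℝ := 2 * lam * (lam - h) with hc
  set cp : ℝ := max c 0 with hcp
  intro N
  induction N using Nat.strong_induction_on with
  | _ N IH =>
    match N with
    | 0 =>
      rw [A_zero hP]
      rw [Nat.cast_zero, mul_zero, Real.exp_zero]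
    | M + 1 =>
      rw [Zpart_rec hP]
      have hstep : ∀ j ∈ Finset.range (M + 1),
          (∫ ω, Zpart K lam h ω j ∂P) * K (M + 1 - j)
            * ((1 + Real.exp (c * ((M + 1 - j : ℕ) : ℝ))) / 2)
          ≤ Real.exp (cp * ((M + 1 : ℕ) : ℝ)) * K (M + 1 - j) := by
        intro j hj
        have hjM : j < M + 1 := Finset.mem_range.mp hj
        have hcast : ((M + 1 - j : ℕ) : ℝ) = ((M + 1 : ℕ) : ℝ) - (j : ℝ) := by
          rw [Nat.cast_sub (by omega)]
        have hn0 : (0 : ℝ) ≤ ((M + 1 - j : ℕ) : ℝ) := Nat.cast_nonneg _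
        have hW0 : (0 : ℝ) ≤ (1 + Real.exp (c * ((M + 1 - j : ℕ) : ℝ))) / 2 := by positivity
        have hWle : (1 + Real.exp (c * ((M + 1 - j : ℕ) : ℝ))) / 2
            ≤ Real.exp (cp * ((M + 1 - j : ℕ) : ℝ)) := by
          have h1 : (1 : ℝ) ≤ Real.exp (cp * ((M + 1 - j : ℕ) : ℝ)) :=
            Real.one_le_exp (mul_nonneg (le_max_right _ _) hn0)
          have h2 : Real.exp (c * ((M + 1 - j : ℕ) : ℝ))
              ≤ Real.exp (cp * ((M + 1 - j : ℕ) : ℝ)) :=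
            Real.exp_le_exp.mpr (mul_le_mul_of_nonneg_right (le_max_left _ _) hn0)
          linarith
        have t1 : (∫ ω, Zpart K lam h ω j ∂P) * K (M + 1 - j)
            ≤ Real.exp (cp * j) * K (M + 1 - j) :=
          mul_le_mul_of_nonneg_right (IH j hjM) (hKnn _)
        have t2 : (∫ ω, Zpart K lam h ω j ∂P) * K (M + 1 - j)
              * ((1 + Real.exp (c * ((M + 1 - j : ℕ) : ℝ))) / 2)
            ≤ Real.exp (cp * j) * K (M + 1 - j)
              * ((1 + Real.exp (c * ((M + 1 - j : ℕ) : ℝ))) / 2) :=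
          mul_le_mul_of_nonneg_right t1 hW0
        have t3 : Real.exp (cp * j) * K (M + 1 - j)
              * ((1 + Real.exp (c * ((M + 1 - j : ℕ) : ℝ))) / 2)
            ≤ Real.exp (cp * j) * K (M + 1 - j) * Real.exp (cp * ((M + 1 - j : ℕ) : ℝ)) :=
          mul_le_mul_of_nonneg_left hWle
            (mul_nonneg (Real.exp_nonneg _) (hKnn _))
        have t4 : Real.exp (cp * j) * K (M + 1 - j) * Real.exp (cp * ((M + 1 - j : ℕ) : ℝ))
            = Real.exp (cp * ((M + 1 : ℕ) : ℝ)) * K (M + 1 - j) := by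
          rw [hcast, mul_right_comm, ← Real.exp_add]
          congr 2
          ring
        calc (∫ ω, Zpart K lam h ω j ∂P) * K (M + 1 - j)
              * ((1 + Real.exp (c * ((M + 1 - j : ℕ) : ℝ))) / 2)
            ≤ Real.exp (cp * j) * K (M + 1 - j)
              * ((1 + Real.exp (c * ((M + 1 - j : ℕ) : ℝ))) / 2) := t2
          _ ≤ Real.exp (cp * j) * K (M + 1 - j) * Real.exp (cp * ((M + 1 - j : ℕ) : ℝ)) := t3
          _ = Real.exp (cp * ((M + 1 : ℕ) : ℝ)) * K (M + 1 - j) := t4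
      calc ∑ j ∈ Finset.range (M + 1), (∫ ω, Zpart K lam h ω j ∂P) * K (M + 1 - j)
            * ((1 + Real.exp (c * ((M + 1 - j : ℕ) : ℝ))) / 2)
          ≤ ∑ j ∈ Finset.range (M + 1), Real.exp (cp * ((M + 1 : ℕ) : ℝ)) * K (M + 1 - j) :=
            Finset.sum_le_sum hstep
        _ = Real.exp (cp * ((M + 1 : ℕ) : ℝ)) * ∑ j ∈ Finset.range (M + 1), K (M + 1 - j) := by
            rw [Finset.mul_sum]
        _ ≤ Real.exp (cp * ((M + 1 : ℕ) : ℝ)) * 1 :=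
            mul_le_mul_of_nonneg_left (Ksum_le K hKnn hKsum M) (Real.exp_nonneg _)
        _ = Real.exp (cp * ((M + 1 : ℕ) : ℝ)) := mul_one _

lemma A_lower {P : Measure (ℕ → ℝ)} (hP : IsGaussianDisorder P) (K : ℕ → ℝ) (lam h : ℝ)
    (hKnn : ∀ n, 0 ≤ K n) (M : ℕ) :
    K (M + 1) * ((1 + Real.exp (2 * lam * (lam - h) * ((M + 1 : ℕ) : ℝ))) / 2)
      ≤ ∫ ω, Zpart K lam h ω (M + 1) ∂P := by
  rw [Zpart_rec hP]
  have h0 : (0 : ℕ) ∈ Finset.range (M + 1) := Finset.mem_range.mpr (by omega)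
  have := Finset.single_le_sum (f := fun j => (∫ ω, Zpart K lam h ω j ∂P) * K (M + 1 - j)
      * ((1 + Real.exp (2 * lam * (lam - h) * ((M + 1 - j : ℕ) : ℝ))) / 2))
    (fun j _ => mul_nonneg (mul_nonneg (A_nonneg K lam h hKnn j) (hKnn _)) (by positivity)) h0
  simpa [A_zero hP] using this

/-- the annealed free energy exists and equals
`2λ(λ-h)` if `h < λ` and `0` if `h ≥ λ`. -/
theorem annealed_free_energy
    (K : ℕ → ℝ) (α CK : ℝ) (hα : 0 < α) (hCK : 0 < CK)
    (hK0 : K 0 = 0) (hKnn : ∀ n, 0 ≤ K n) (hKsum : HasSum K 1)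
    (hTail : Tendsto (fun n : ℕ => (n : ℝ) ^ (1 + α) * K n) atTop (nhds CK))
    (P : Measure (ℕ → ℝ)) (hP : IsGaussianDisorder P)
    (lam h : ℝ) (hlam : 0 ≤ lam) (hh : 0 ≤ h) :
    Tendsto (fun N : ℕ => ((N : ℝ))⁻¹ * Real.log (∫ ω, Zpart K lam h ω N ∂P))
      atTop (nhds (if h < lam then 2 * lam * (lam - h) else 0)) := by
  set c : ℝ := 2 * lam * (lam - h) with hc
  set cp : ℝ := max c 0 with hcp
  have hval : (if h < lam then 2 * lam * (lam - h) else 0) = cp := by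
    by_cases hcase : h < lam
    · rw [if_pos hcase, hcp]
      exact (max_eq_left (by nlinarith)).symm
    · rw [if_neg hcase, hcp]
      push_neg at hcase
      exact (max_eq_right (by nlinarith)).symm
  rw [hval]
  -- eventual positivity of K
  have hTailev : ∀ᶠ N : ℕ in atTop, CK / 2 < (N : ℝ) ^ (1 + α) * K N :=
    hTail.eventually (eventually_gt_nhds (by linarith))
  have hKpos : ∀ᶠ N : ℕ in atTop, 0 < K N := by
    filter_upwards [hTailev, eventually_ge_atTop 1] with N hN hN1
    have hNpos : (0 : ℝ) < (N : ℝ) ^ (1 + α) :=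
      Real.rpow_pos_of_pos (by exact_mod_cast Nat.pos_of_ne_zero (by omega)) _
    nlinarith
  -- upper bound eventually
  have hFupper : ∀ᶠ N : ℕ in atTop,
      ((N : ℝ))⁻¹ * Real.log (∫ ω, Zpart K lam h ω N ∂P) ≤ cp := by
    filter_upwards [hKpos, eventually_ge_atTop 1] with N hK hN1
    obtain ⟨M, rfl⟩ : ∃ M, N = M + 1 := ⟨N - 1, by omega⟩
    have hWpos : (0 : ℝ) < (1 + Real.exp (c * ((M + 1 : ℕ) : ℝ))) / 2 := by positivity
    have hApos : 0 < ∫ ω, Zpart K lam h ω (M + 1) ∂P :=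
      lt_of_lt_of_le (mul_pos hK hWpos) (A_lower hP K lam h hKnn M)
    have hlog : Real.log (∫ ω, Zpart K lam h ω (M + 1) ∂P) ≤ cp * ((M + 1 : ℕ) : ℝ) := by
      have := (Real.log_le_log_iff hApos (Real.exp_pos _)).mpr (A_upper hP K lam h hKnn hKsum (M + 1))
      rwa [Real.log_exp] at this
    have hN0 : ((M + 1 : ℕ) : ℝ) ≠ 0 := by positivity
    calc ((M + 1 : ℕ) : ℝ)⁻¹ * Real.log (∫ ω, Zpart K lam h ω (M + 1) ∂P)
        ≤ ((M + 1 : ℕ) : ℝ)⁻¹ * (cp * ((M + 1 : ℕ) : ℝ)) :=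
          mul_le_mul_of_nonneg_left hlog (by positivity)
      _ = cp := by field_simp
  -- lower bound eventually
  have hFlower : ∀ᶠ N : ℕ in atTop,
      ((N : ℝ))⁻¹ * Real.log (K N) + (cp - ((N : ℝ))⁻¹ * Real.log 2)
        ≤ ((N : ℝ))⁻¹ * Real.log (∫ ω, Zpart K lam h ω N ∂P) := by
    filter_upwards [hKpos, eventually_ge_atTop 1] with N hK hN1
    obtain ⟨M, rfl⟩ : ∃ M, N = M + 1 := ⟨N - 1, by omega⟩
    set n : ℝ := ((M + 1 : ℕ) : ℝ) with hn
    have hWpos : (0 : ℝ) < (1 + Real.exp (c * n)) / 2 := by positivity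
    have hApos : 0 < ∫ ω, Zpart K lam h ω (M + 1) ∂P :=
      lt_of_lt_of_le (mul_pos hK hWpos) (A_lower hP K lam h hKnn M)
    have hexp : Real.exp (cp * n) ≤ 1 + Real.exp (c * n) := by
      rcases le_total c 0 with hc0 | hc0
      · have : cp = 0 := max_eq_right hc0
        rw [this, zero_mul, Real.exp_zero]
        linarith [Real.exp_pos (c * n)]
      · have : cp = c := max_eq_left hc0
        rw [this]
        linarith
    have hlogW : cp * n - Real.log 2 ≤ Real.log ((1 + Real.exp (c * n)) / 2) := by
      have h1 : Real.exp (cp * n) / 2 ≤ (1 + Real.exp (c * n)) / 2 := by linarith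
      have h2 := (Real.log_le_log_iff (by positivity) hWpos).mpr h1
      rwa [Real.log_div (Real.exp_ne_zero _) two_ne_zero, Real.log_exp] at h2
    have hlogA : Real.log (K (M + 1)) + (cp * n - Real.log 2)
        ≤ Real.log (∫ ω, Zpart K lam h ω (M + 1) ∂P) := by
      have h1 := (Real.log_le_log_iff (mul_pos hK hWpos) hApos).mpr (A_lower hP K lam h hKnn M)
      rw [Real.log_mul (ne_of_gt hK) (ne_of_gt hWpos)] at h1
      linarith
    have hN0 : n ≠ 0 := by positivity
    have hNinv : (0 : ℝ) ≤ n⁻¹ := by positivity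
    calc n⁻¹ * Real.log (K (M + 1)) + (cp - n⁻¹ * Real.log 2)
        = n⁻¹ * (Real.log (K (M + 1)) + (cp * n - Real.log 2)) := by
          field_simp
      _ ≤ n⁻¹ * Real.log (∫ ω, Zpart K lam h ω (M + 1) ∂P) :=
          mul_le_mul_of_nonneg_left hlogA hNinv
  -- the lower bound tends to cp
  have hT2 : Tendsto (fun N : ℕ => ((N : ℝ))⁻¹ * Real.log 2) atTop (nhds 0) := by
    simpa using tendsto_inv_atTop_nhds_zero_nat.mul_const (Real.log 2)
  have hT1b : Tendsto (fun N : ℕ => ((N : ℝ))⁻¹ * Real.log N) atTop (nhds 0) := by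
    have := (Real.tendsto_pow_log_div_mul_add_atTop 1 0 1 one_ne_zero).comp
      tendsto_natCast_atTop_atTop (α := ℕ)
    refine this.congr (fun N => ?_)
    simp only [Function.comp_apply, pow_one, one_mul, add_zero]
    rw [div_eq_mul_inv, mul_comm]
  have hT1a : Tendsto (fun N : ℕ => ((N : ℝ))⁻¹ * Real.log ((N : ℝ) ^ (1 + α) * K N))
      atTop (nhds 0) := by
    simpa using tendsto_inv_atTop_nhds_zero_nat.mul (hTail.log hCK.ne')
  have hT1 : Tendsto (fun N : ℕ => ((N : ℝ))⁻¹ * Real.log (K N)) atTop (nhds 0) := by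
    have hH : Tendsto (fun N : ℕ => ((N : ℝ))⁻¹ * Real.log ((N : ℝ) ^ (1 + α) * K N)
        - (1 + α) * (((N : ℝ))⁻¹ * Real.log N)) atTop (nhds 0) := by
      simpa using hT1a.sub (hT1b.const_mul (1 + α))
    refine hH.congr' ?_
    filter_upwards [hKpos, eventually_ge_atTop 1] with N hK hN1
    have hNpos : (0 : ℝ) < (N : ℝ) := by exact_mod_cast Nat.pos_of_ne_zero (by omega)
    rw [Real.log_mul (ne_of_gt (Real.rpow_pos_of_pos hNpos _)) (ne_of_gt hK),
      Real.log_rpow hNpos]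
    ring
  have hG : Tendsto (fun N : ℕ => ((N : ℝ))⁻¹ * Real.log (K N) + (cp - ((N : ℝ))⁻¹ * Real.log 2))
      atTop (nhds cp) := by
    have := hT1.add (tendsto_const_nhds (x := cp) (f := atTop (α := ℕ)) |>.sub hT2)
    simpa using this
  exact tendsto_of_tendsto_of_tendsto_of_le_of_le' hG tendsto_const_nhds hFlower hFupper
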